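/- arXiv:math/0203236 — 4 statements merged into one kernel-verified Lean document; each statement's English description precedes it below -/
import Mathlib

section
/- Let X be a path-connected topological space and let c ∈ X. Then the inclusion of the subspace ∧^c X of free loops passing through c into the full free loop space ∧X is a weak homotopy equivalence; that is, it induces a bijection on path components, and for every γ ∈ ∧^c X and every n ≥ 1 it induces a group isomorphism π_n(∧^c X, γ) → π_n(∧X, γ) of homotopy groups. -/
open scoped unitInterval Topology

noncomputable section

/-- The subspace `∧ᶜX ⊆ ∧X = C(S¹, X)` of free loops passing through `c`. -/
abbrev FreeLoopsThrough (X : Type) [TopologicalSpace X] (c : X) : Type :=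
  {f : C(Circle, X) // c ∈ Set.range f}

/-- The inclusion `∧ᶜX ↪ ∧X` as a continuous map. -/
def freeLoopInclusion (X : Type) [TopologicalSpace X] (c : X) :
    C(FreeLoopsThrough X c, C(Circle, X)) :=
  ⟨Subtype.val, continuous_subtype_val⟩

/-- The map induced by a continuous map on path components. -/
def inducedPi0 {A B : Type} [TopologicalSpace A] [TopologicalSpace B] (g : C(A, B)) :
    ZerothHomotopy A → ZerothHomotopy B :=
  Quotient.map g fun _ _ h => Nonempty.map (fun p => p.map g.continuous) h

/-- The map induced by a continuous map on `N`-th homotopy groups. -/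
def inducedPi {A B : Type} [TopologicalSpace A] [TopologicalSpace B]
    (N : Type) (g : C(A, B)) (a : A) :
    HomotopyGroup N A a → HomotopyGroup N B (g a) :=
  Quotient.map
    (fun p => ⟨g.comp p.1, fun y hy => by
      simp [ContinuousMap.comp_apply, p.2 y hy]⟩)
    (fun _ _ h => Nonempty.map (fun H => H.compContinuousMap g) h)

namespace FLW
open Set

local instance : Fact ((0:ℝ) < 1) := ⟨one_pos⟩

def ε (u : ℝ) : Circle := AddCircle.homeomorphCircle one_ne_zero (u : AddCircle (1:ℝ))

lemma continuous_ε : Continuous ε :=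
  (AddCircle.homeomorphCircle one_ne_zero).continuous.comp continuous_quotient_mk'

lemma ε_one : ε 1 = ε 0 := by
  unfold ε
  norm_num [AddCircle.coe_period]

lemma ε_surj (z : Circle) : ∃ u, u ∈ Ico (0:ℝ) 1 ∧ ε u = z := by
  set y := (AddCircle.homeomorphCircle (one_ne_zero)).symm z with hy
  refine ⟨(AddCircle.equivIco 1 0 y : ℝ), by simpa using (AddCircle.equivIco 1 0 y).2, ?_⟩
  have h1 : (((AddCircle.equivIco 1 0 y : ℝ)) : AddCircle (1:ℝ)) = y := by
    have := (AddCircle.equivIco (1:ℝ) 0).symm_apply_apply y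
    simpa [AddCircle.equivIco, QuotientAddGroup.equivIcoMod] using this
  unfold ε
  rw [h1, hy, Homeomorph.apply_symm_apply]

variable {A X : Type} [TopologicalSpace A] [TopologicalSpace X]

/-- Descend a map `A × ℝ → X` which agrees at `0` and `1` to `A × Circle`. -/
def mkCircle [LocallyCompactSpace A] (g : C(A × ℝ, X)) (hg : ∀ a, g (a, 0) = g (a, 1)) :
    C(A × Circle, X) :=
  letI f : C(ℝ, C(A, X)) := (g.comp ⟨Prod.swap, continuous_swap⟩).curry
  letI q : AddCircle (1:ℝ) → C(A, X) := AddCircle.liftIco 1 0 f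
  haveI hq : Continuous q := AddCircle.liftIco_zero_continuous
    (by ext a; exact hg a) f.continuous.continuousOn
  ⟨fun az => q ((AddCircle.homeomorphCircle one_ne_zero).symm az.2) az.1,
   by
     exact ContinuousEval.continuous_eval.comp
       ((hq.comp ((AddCircle.homeomorphCircle one_ne_zero).symm.continuous.comp
         continuous_snd)).prodMk continuous_fst)⟩

lemma mkCircle_apply [LocallyCompactSpace A] (g : C(A × ℝ, X)) (hg : ∀ a, g (a, 0) = g (a, 1))
    (a : A) {u : ℝ} (hu : u ∈ Ico (0:ℝ) 1) : mkCircle g hg (a, ε u) = g (a, u) := by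
  show (AddCircle.liftIco 1 0 ⇑((g.comp ⟨Prod.swap, continuous_swap⟩).curry))
    ((AddCircle.homeomorphCircle one_ne_zero).symm (ε u)) a = _
  rw [show (AddCircle.homeomorphCircle one_ne_zero).symm (ε u) = (u : AddCircle (1:ℝ)) from
    Homeomorph.symm_apply_apply _ _]
  rw [AddCircle.liftIco_zero_coe_apply hu]
  rfl

/-- clamp to the unit interval -/
abbrev pr : ℝ → I := Set.projIcc (0:ℝ) 1 zero_le_one

lemma pr_coe (x : I) : pr (x:ℝ) = x := Set.projIcc_val zero_le_one x
lemma pr_zero : pr 0 = 0 := pr_coe 0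
lemma pr_one : pr 1 = 1 := pr_coe 1
lemma pr_nonpos {x : ℝ} (h : x ≤ 0) : pr x = 0 := by
  show Set.projIcc (0:ℝ) 1 zero_le_one x = 0
  rw [Set.projIcc_of_le_left _ h]; rfl
lemma pr_ge_one {x : ℝ} (h : 1 ≤ x) : pr x = 1 := by
  show Set.projIcc (0:ℝ) 1 zero_le_one x = 1
  rw [Set.projIcc_of_right_le _ h]; rfl

/-- The detour-insertion homotopy: given a family `F` of free loops and a family of paths `R`
from the basepoint values to `c`, produce a homotopy inserting a growing detour. -/
lemma detour (c : X) [LocallyCompactSpace A]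
    (F : C(A × Circle, X)) (R : C(A × I, X))
    (hR0 : ∀ a, R (a, 0) = F (a, ε 0)) (hR1 : ∀ a, R (a, 1) = c) :
    ∃ G : C((A × I) × Circle, X),
      (∀ a z, G ((a, 0), z) = F (a, z)) ∧
      (∀ a, c ∈ Set.range fun z => G ((a, 1), z)) ∧
      (∀ a t, (Set.range fun z => F (a, z)) ⊆ Set.range fun z => G ((a, t), z)) := by
  classical
  have hden : ∀ t : I, (0:ℝ) < 1 - 2*(t:ℝ)/3 := fun t => by have := t.2.2; linarith
  set gf : (A × I) × ℝ → X := fun x =>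
    if x.2 ≤ (x.1.2:ℝ)/3 then R (x.1.1, pr (3*x.2))
    else if x.2 ≤ 2*(x.1.2:ℝ)/3 then R (x.1.1, pr (2*(x.1.2:ℝ) - 3*x.2))
    else F (x.1.1, ε ((x.2 - 2*(x.1.2:ℝ)/3)/(1 - 2*(x.1.2:ℝ)/3))) with hgf
  have b1cont : Continuous fun x : (A × I) × ℝ => R (x.1.1, pr (3*x.2)) := by
    apply R.continuous.comp
    exact (continuous_fst.fst).prodMk (continuous_projIcc.comp (by fun_prop))
  have b2cont : Continuous fun x : (A × I) × ℝ => R (x.1.1, pr (2*(x.1.2:ℝ) - 3*x.2)) := by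
    apply R.continuous.comp
    refine (continuous_fst.fst).prodMk (continuous_projIcc.comp ?_)
    fun_prop
  have b3cont : Continuous fun x : (A × I) × ℝ =>
      F (x.1.1, ε ((x.2 - 2*(x.1.2:ℝ)/3)/(1 - 2*(x.1.2:ℝ)/3))) := by
    apply F.continuous.comp
    refine (continuous_fst.fst).prodMk (continuous_ε.comp ?_)
    apply Continuous.div
    · fun_prop
    · fun_prop
    · exact fun x => (hden x.1.2).ne'
  have gcont : Continuous gf := by
    rw [hgf]
    have inner : Continuous fun x : (A × I) × ℝ =>
        if x.2 ≤ 2*(x.1.2:ℝ)/3 then R (x.1.1, pr (2*(x.1.2:ℝ) - 3*x.2))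
        else F (x.1.1, ε ((x.2 - 2*(x.1.2:ℝ)/3)/(1 - 2*(x.1.2:ℝ)/3))) := by
      apply Continuous.if_le b2cont b3cont continuous_snd (by fun_prop)
      intro x hx
      have h0 : (0:ℝ) ≤ (x.1.2:ℝ) := x.1.2.2.1
      have e1 : 2*(x.1.2:ℝ) - 3*x.2 = 0 := by rw [hx]; ring
      have e2 : x.2 - 2*(x.1.2:ℝ)/3 = 0 := by rw [hx]; ring
      rw [e1, pr_zero, hR0, e2, zero_div]
    apply Continuous.if_le b1cont inner continuous_snd (by fun_prop)
    intro x hx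
    have h0 : (0:ℝ) ≤ (x.1.2:ℝ) := x.1.2.2.1
    rw [if_pos (by linarith : x.2 ≤ 2*(x.1.2:ℝ)/3)]
    have e2 : 2*(x.1.2:ℝ) - 3*x.2 = 3*x.2 := by rw [hx]; ring
    rw [e2]
  have hg : ∀ p : A × I, gf (p, 0) = gf (p, 1) := by
    intro p
    have h0 : (0:ℝ) ≤ (p.2:ℝ) := p.2.2.1
    have h1 : (p.2:ℝ) ≤ 1 := p.2.2.2
    have l : gf (p, 0) = F (p.1, ε 0) := by
      rw [hgf]
      simp only
      rw [if_pos (by linarith : (0:ℝ) ≤ (p.2:ℝ)/3)]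
      rw [show 3*(0:ℝ) = 0 by ring, pr_zero, hR0]
    have r : gf (p, 1) = F (p.1, ε 0) := by
      rw [hgf]
      simp only
      rw [if_neg (by linarith : ¬ (1:ℝ) ≤ (p.2:ℝ)/3),
        if_neg (by linarith : ¬ (1:ℝ) ≤ 2*(p.2:ℝ)/3),
        div_self (hden p.2).ne', ε_one]
    rw [l, r]
  refine ⟨mkCircle ⟨gf, gcont⟩ hg, ?_, ?_, ?_⟩
  · intro a z
    obtain ⟨u, hu, rfl⟩ := ε_surj z
    rw [mkCircle_apply _ _ _ hu]
    show gf ((a, 0), u) = _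
    rcases eq_or_lt_of_le hu.1 with h | h
    · rw [hgf]; simp only
      rw [if_pos (by simp [← h] : u ≤ ((0:I):ℝ)/3)]
      rw [show 3*u = 0 by rw [← h]; ring, pr_zero, hR0, ← h]
    · rw [hgf]; simp only
      rw [if_neg (by simp; linarith : ¬ u ≤ ((0:I):ℝ)/3),
        if_neg (by simp; linarith : ¬ u ≤ 2*((0:I):ℝ)/3)]
      norm_num
  · intro a
    refine ⟨ε (1/3), ?_⟩
    show mkCircle ⟨gf, gcont⟩ hg ((a, 1), ε (1/3)) = c
    rw [mkCircle_apply _ _ _ (show (1/3:ℝ) ∈ Ico (0:ℝ) 1 by norm_num)]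
    show gf ((a, 1), 1/3) = _
    rw [hgf]; simp only
    rw [if_pos (by norm_num : (1/3:ℝ) ≤ ((1:I):ℝ)/3)]
    rw [show 3*(1/3:ℝ) = 1 by norm_num, pr_one, hR1]
  · rintro a t _ ⟨z, rfl⟩
    obtain ⟨w, hw, rfl⟩ := ε_surj z
    have h0 : (0:ℝ) ≤ (t:ℝ) := t.2.1
    have h1 : (t:ℝ) ≤ 1 := t.2.2
    have hd := hden t
    set d : ℝ := 1 - 2*(t:ℝ)/3 with hdd
    set u : ℝ := 2*(t:ℝ)/3 + w*d with huu
    have hwd : 0 ≤ w * d := mul_nonneg hw.1 hd.le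
    have hu : u ∈ Ico (0:ℝ) 1 := by
      constructor
      · positivity
      · have : w * d < d := by
          have := hw.2
          nlinarith
        rw [huu]; rw [hdd] at this ⊢; linarith
    refine ⟨ε u, ?_⟩
    show mkCircle ⟨gf, gcont⟩ hg ((a, t), ε u) = F (a, ε w)
    rw [mkCircle_apply _ _ _ hu]
    show gf ((a, t), u) = _
    rw [hgf]; simp only
    by_cases hc1 : u ≤ (t:ℝ)/3
    · have ht : (t:ℝ) = 0 := by rw [huu] at hc1; nlinarith
      have hwz : w = 0 := by
        rw [huu, ht] at hc1
        have : w * d ≤ 0 := by linarith [hc1]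
        have : w * d = 0 := le_antisymm this hwd
        rcases mul_eq_zero.1 this with h | h
        · exact h
        · exact absurd h hd.ne'
      rw [if_pos hc1]
      have : 3*u = 0 := by rw [huu, ht, hwz]; ring
      rw [this, pr_zero, hR0, hwz]
    · rw [if_neg hc1]
      by_cases hc2 : u ≤ 2*(t:ℝ)/3
      · have hwz : w = 0 := by
          have : w * d ≤ 0 := by rw [huu] at hc2; linarith
          have : w * d = 0 := le_antisymm this hwd
          rcases mul_eq_zero.1 this with h | h
          · exact h
          · exact absurd h hd.ne'
        rw [if_pos hc2]
        have : 2*(t:ℝ) - 3*u = 0 := by rw [huu, hwz]; ring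
        rw [this, pr_zero, hR0, hwz]
      · rw [if_neg hc2]
        have : (u - 2*(t:ℝ)/3)/d = w := by
          rw [huu]
          field_simp
          ring
        rw [← hdd, this]

/-- Curried detour lemma. -/
lemma detour_curried (c : X) [LocallyCompactSpace A]
    (f : C(A, C(Circle, X))) (R : C(A × I, X))
    (hR0 : ∀ a, R (a, 0) = f a (ε 0)) (hR1 : ∀ a, R (a, 1) = c) :
    ∃ H : C(A × I, C(Circle, X)),
      (∀ a, H (a, 0) = f a) ∧
      (∀ a, c ∈ Set.range (H (a, 1))) ∧
      (∀ a t, Set.range (f a) ⊆ Set.range (H (a, t))) := by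
  obtain ⟨G, h1, h2, h3⟩ := detour c f.uncurry R (fun a => hR0 a) hR1
  refine ⟨G.curry, ?_, ?_, ?_⟩
  · intro a; ext z; exact h1 a z
  · intro a; exact h2 a
  · intro a t; exact h3 a t

/-- Construct the family of paths `R` from a contraction of the parameter space. -/
lemma exists_R (c : X) [PathConnectedSpace X]
    (f : C(A, C(Circle, X))) (ct : C(A × I, A)) (a₀ : A)
    (h0 : ∀ a, ct (a, 0) = a) (h1 : ∀ a, ct (a, 1) = a₀) :
    ∃ R : C(A × I, X), (∀ a, R (a, 0) = f a (ε 0)) ∧ (∀ a, R (a, 1) = c) := by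
  classical
  obtain ⟨ρ⟩ : Joined (f a₀ (ε 0)) c := PathConnectedSpace.joined _ _
  have bc1 : Continuous fun au : A × I => f (ct (au.1, pr (2*(au.2:ℝ)))) (ε 0) := by
    have hev : Continuous fun b : A => f b (ε 0) :=
      (continuous_eval_const (ε 0)).comp f.continuous
    exact hev.comp (ct.continuous.comp (continuous_fst.prodMk
      (continuous_projIcc.comp (by fun_prop))))
  have bc2 : Continuous fun au : A × I => ρ (pr (2*(au.2:ℝ) - 1)) :=
    ρ.continuous.comp (continuous_projIcc.comp (by fun_prop))
  have key : Continuous fun au : A × I => if (au.2:ℝ) ≤ 1/2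
      then f (ct (au.1, pr (2*(au.2:ℝ)))) (ε 0) else ρ (pr (2*(au.2:ℝ) - 1)) := by
    apply Continuous.if_le bc1 bc2 (by fun_prop) continuous_const
    intro x hx
    have e1 : 2*(x.2:ℝ) = 1 := by rw [hx]; ring
    have e2 : 2*(x.2:ℝ) - 1 = 0 := by rw [hx]; ring
    rw [e1]
    rw [show (1:ℝ) - 1 = 0 by ring, pr_one, pr_zero, h1, ρ.source]
  refine ⟨⟨_, key⟩, ?_, ?_⟩
  · intro a
    show (if ((0:I):ℝ) ≤ 1/2 then _ else _) = _
    rw [if_pos (by norm_num)]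
    rw [show 2*((0:I):ℝ) = ((0:I):ℝ) by norm_num]
    rw [pr_coe, h0]
  · intro a
    show (if ((1:I):ℝ) ≤ 1/2 then _ else _) = _
    rw [if_neg (by norm_num)]
    rw [show 2*((1:I):ℝ) - 1 = 1 by norm_num, pr_one, ρ.target]

section Cube

variable {N : Type} [Fintype N]

/-- Collar weight on one coordinate. -/
def wt (v : I) : ℝ := min 1 (min (4*(v:ℝ)) (4 - 4*(v:ℝ)))

lemma wt_continuous : Continuous wt := by unfold wt; fun_prop

lemma wt_mem (v : I) : wt v ∈ Icc (0:ℝ) 1 := by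
  constructor
  · have h1 := v.2.1; have h2 := v.2.2
    apply le_min (by norm_num) (le_min (by linarith) (by linarith))
  · exact min_le_left _ _

lemma wt_zero : wt 0 = 0 := by norm_num [wt]
lemma wt_one : wt 1 = 0 := by norm_num [wt]

lemma wt_cases (v : I) : wt v = 1 ∨ (v:ℝ) < 1/4 ∨ 3/4 < (v:ℝ) := by
  by_cases hl : (v:ℝ) < 1/4
  · exact Or.inr (Or.inl hl)
  by_cases hr : 3/4 < (v:ℝ)
  · exact Or.inr (Or.inr hr)
  push_neg at hl hr
  left
  have : (1:ℝ) ≤ min (4*(v:ℝ)) (4 - 4*(v:ℝ)) := le_min (by linarith) (by linarith)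
  simp [wt, min_eq_left this]

/-- Collar weight on the cube. -/
def τ (s : N → I) : ℝ := ∏ i, wt (s i)

lemma τ_continuous : Continuous (τ (N := N)) :=
  continuous_finset_prod _ fun i _ => wt_continuous.comp (continuous_apply i)

lemma τ_mem (s : N → I) : τ s ∈ Icc (0:ℝ) 1 :=
  ⟨Finset.prod_nonneg fun i _ => (wt_mem (s i)).1,
   Finset.prod_le_one (fun i _ => (wt_mem (s i)).1) (fun i _ => (wt_mem (s i)).2)⟩

lemma τ_boundary {s : N → I} (hs : s ∈ Cube.boundary N) : τ s = 0 := by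
  obtain ⟨i, hi⟩ := hs
  refine Finset.prod_eq_zero (Finset.mem_univ i) ?_
  rcases hi with h | h <;> rw [h]
  · exact wt_zero
  · exact wt_one

/-- Radial stretch of the cube, with parameter. -/
def ψu (u : I) (s : N → I) : N → I := fun i => pr ((1+(u:ℝ))*((s i):ℝ) - (u:ℝ)/2)

lemma ψu_continuous : Continuous fun p : I × (N → I) => ψu p.1 p.2 := by
  apply continuous_pi
  intro i
  exact continuous_projIcc.comp (by fun_prop)

lemma ψu_zero (s : N → I) : ψu 0 s = s := by
  funext i
  show pr ((1+((0:I):ℝ))*((s i):ℝ) - ((0:I):ℝ)/2) = s i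
  rw [show (1+((0:I):ℝ))*((s i):ℝ) - ((0:I):ℝ)/2 = ((s i):ℝ) by norm_num]
  exact pr_coe _

lemma ψu_boundary (u : I) {s : N → I} (hs : s ∈ Cube.boundary N) :
    ψu u s ∈ Cube.boundary N := by
  obtain ⟨i, hi⟩ := hs
  have hu0 : (0:ℝ) ≤ (u:ℝ) := u.2.1
  refine ⟨i, ?_⟩
  rcases hi with h | h
  · left
    show pr ((1+(u:ℝ))*((s i):ℝ) - (u:ℝ)/2) = 0
    rw [h]
    apply pr_nonpos
    norm_num
    linarith
  · right
    show pr ((1+(u:ℝ))*((s i):ℝ) - (u:ℝ)/2) = 1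
    rw [h]
    apply pr_ge_one
    norm_num
    linarith

/-- The full stretch. -/
def ψst (s : N → I) : N → I := ψu 1 s

lemma ψst_continuous : Continuous (ψst (N := N)) :=
  ψu_continuous.comp (continuous_const.prodMk continuous_id)

lemma ψst_boundary {s : N → I} (hs : s ∈ Cube.boundary N) : ψst s ∈ Cube.boundary N :=
  ψu_boundary 1 hs

lemma ψst_boundary_of_τ_ne_one {s : N → I} (h : τ s ≠ 1) : ψst s ∈ Cube.boundary N := by
  have : ∃ i, wt (s i) ≠ 1 := by
    by_contra hc
    push_neg at hc
    exact h (Finset.prod_eq_one fun i _ => hc i)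
  obtain ⟨i, hi⟩ := this
  rcases wt_cases (s i) with h1 | h2 | h3
  · exact absurd h1 hi
  · refine ⟨i, Or.inl ?_⟩
    show pr ((1+((1:I):ℝ))*((s i):ℝ) - ((1:I):ℝ)/2) = 0
    apply pr_nonpos
    norm_num
    linarith
  · refine ⟨i, Or.inr ?_⟩
    show pr ((1+((1:I):ℝ))*((s i):ℝ) - ((1:I):ℝ)/2) = 1
    apply pr_ge_one
    norm_num
    linarith

end Cube

section CubeExtra

variable {N : Type} [Fintype N]

/-- Contraction of the cube to the origin. -/
def ctCube : C((N → I) × I, N → I) :=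
  ⟨fun su i => pr ((1 - (su.2:ℝ))*((su.1 i):ℝ)),
   by apply continuous_pi; intro i; exact continuous_projIcc.comp (by fun_prop)⟩

lemma ctCube_zero (s : N → I) : ctCube (s, 0) = s := by
  funext i
  show pr ((1 - ((0:I):ℝ))*((s i):ℝ)) = s i
  rw [show (1 - ((0:I):ℝ))*((s i):ℝ) = ((s i):ℝ) by norm_num]
  exact pr_coe _

lemma ctCube_one (s : N → I) : ctCube (s, 1) = (fun _ => (0:I)) := by
  funext i
  show pr ((1 - ((1:I):ℝ))*((s i):ℝ)) = 0
  rw [show (1 - ((1:I):ℝ))*((s i):ℝ) = 0 by norm_num]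
  exact pr_zero

/-- Contraction of the cube times an interval to the origin. -/
def ctCube2 : C(((N → I) × I) × I, (N → I) × I) :=
  ⟨fun pu => (fun i => pr ((1 - (pu.2:ℝ))*((pu.1.1 i):ℝ)), pr ((1 - (pu.2:ℝ))*((pu.1.2):ℝ))),
   by
     apply Continuous.prodMk
     · apply continuous_pi; intro i; exact continuous_projIcc.comp (by fun_prop)
     · exact continuous_projIcc.comp (by fun_prop)⟩

lemma ctCube2_zero (p : (N → I) × I) : ctCube2 (p, 0) = p := by
  ext1
  · funext i
    show pr ((1 - ((0:I):ℝ))*((p.1 i):ℝ)) = p.1 i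
    rw [show (1 - ((0:I):ℝ))*((p.1 i):ℝ) = ((p.1 i):ℝ) by norm_num]
    exact pr_coe _
  · show pr ((1 - ((0:I):ℝ))*((p.2):ℝ)) = p.2
    rw [show (1 - ((0:I):ℝ))*((p.2):ℝ) = ((p.2):ℝ) by norm_num]
    exact pr_coe _

lemma ctCube2_one (p : (N → I) × I) : ctCube2 (p, 1) = ((fun _ => (0:I)), (0:I)) := by
  ext1
  · funext i
    show pr ((1 - ((1:I):ℝ))*((p.1 i):ℝ)) = 0
    rw [show (1 - ((1:I):ℝ))*((p.1 i):ℝ) = 0 by norm_num]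
    exact pr_zero
  · show pr ((1 - ((1:I):ℝ))*((p.2):ℝ)) = 0
    rw [show (1 - ((1:I):ℝ))*((p.2):ℝ) = 0 by norm_num]
    exact pr_zero

/-- Stretch on one interval coordinate. -/
def ψI (t : I) : I := pr (2*(t:ℝ) - 1/2)

lemma ψI_continuous : Continuous ψI := continuous_projIcc.comp (by fun_prop)

lemma ψI_zero : ψI 0 = 0 := pr_nonpos (by norm_num)
lemma ψI_one : ψI 1 = 1 := pr_ge_one (by norm_num)
lemma ψI_lt {t : I} (h : (t:ℝ) < 1/4) : ψI t = 0 := pr_nonpos (by linarith)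
lemma ψI_gt {t : I} (h : 3/4 < (t:ℝ)) : ψI t = 1 := pr_ge_one (by linarith)

end CubeExtra

section Loops

open Topology.Homotopy GenLoop

variable {N : Type} [Fintype N] {Z : Type} [TopologicalSpace Z] {z₀ : Z}

/-- composition with the stretch map as a `GenLoop` -/
def stretchG (v : Ω^ N Z z₀) : Ω^ N Z z₀ :=
  ⟨v.1.comp ⟨ψst, ψst_continuous⟩, fun y hy => v.2 _ (ψst_boundary hy)⟩

lemma stretchG_apply (v : Ω^ N Z z₀) (s : N → I) : stretchG v s = v.1 (ψst s) := rfl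

lemma stretch_homotopic (v : Ω^ N Z z₀) : GenLoop.Homotopic v (stretchG v) := by
  constructor
  refine ⟨⟨⟨fun p => v.1 (ψu p.1 p.2), v.1.continuous.comp ψu_continuous⟩, ?_, ?_⟩, ?_⟩
  · intro s
    show v.1 (ψu 0 s) = _
    rw [ψu_zero]
  · intro s
    rfl
  · intro t y hy
    show v.1 (ψu t y) = v.1 y
    rw [v.2 _ (ψu_boundary t hy), v.2 _ hy]

end Loops

end FLW
namespace FLW

open Topology.Homotopy GenLoop

section Main

variable {X : Type} [TopologicalSpace X] {c : X} {N : Type} [Fintype N]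

local notation "Y" => C(Circle, X)
local notation "Yc" => FreeLoopsThrough X c

/-- π₀ surjectivity. -/
lemma surj0 [PathConnectedSpace X] (f : Y) : ∃ γ' : Yc, Joined (γ' : Y) f := by
  set fc : C(I, Y) := ContinuousMap.const I f with hfc
  obtain ⟨R, hR0, hR1⟩ := exists_R c fc
    ⟨fun p => pr ((1 - (p.2:ℝ))*((p.1):ℝ)), continuous_projIcc.comp (by fun_prop)⟩ 0
    (fun a => by
      show pr ((1 - ((0:I):ℝ))*((a:ℝ))) = a
      rw [show (1 - ((0:I):ℝ))*(a:ℝ) = (a:ℝ) by norm_num]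
      exact pr_coe _)
    (fun a => by
      show pr ((1 - ((1:I):ℝ))*((a:ℝ))) = 0
      rw [show (1 - ((1:I):ℝ))*(a:ℝ) = 0 by norm_num]
      exact pr_zero)
  obtain ⟨H, hH0, hH1, hHr⟩ := detour_curried c fc R hR0 hR1
  refine ⟨⟨H (0, 1), hH1 0⟩, ?_⟩
  constructor
  exact (Path.mk ⟨fun t => H (0, t), H.continuous.comp (by fun_prop)⟩
    (by show H (0,0) = f; rw [hH0]; rfl) rfl).symm

/-- π₀ injectivity. -/
lemma inj0 [PathConnectedSpace X] (γ₀ γ₁ : Yc) (h : Joined (γ₀ : Y) (γ₁ : Y)) :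
    Joined γ₀ γ₁ := by
  obtain ⟨p⟩ := h
  obtain ⟨R, hR0, hR1⟩ := exists_R c (p.toContinuousMap)
    ⟨fun q => pr ((1 - (q.2:ℝ))*((q.1):ℝ)), continuous_projIcc.comp (by fun_prop)⟩ 0
    (fun a => by
      show pr ((1 - ((0:I):ℝ))*((a:ℝ))) = a
      rw [show (1 - ((0:I):ℝ))*(a:ℝ) = (a:ℝ) by norm_num]
      exact pr_coe _)
    (fun a => by
      show pr ((1 - ((1:I):ℝ))*((a:ℝ))) = 0
      rw [show (1 - ((1:I):ℝ))*(a:ℝ) = 0 by norm_num]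
      exact pr_zero)
  obtain ⟨H, hH0, hH1, hHr⟩ := detour_curried c p.toContinuousMap R hR0 hR1
  have hbase : ∀ a t, Set.range (p a) ⊆ Set.range (H (a, t)) := fun a t => hHr a t
  have hmem0 : ∀ t : I, c ∈ Set.range (H (0, t)) := fun t => by
    apply hbase 0 t
    rw [show p 0 = (γ₀ : Y) from p.source]
    exact γ₀.2
  have hmem1 : ∀ t : I, c ∈ Set.range (H (1, t)) := fun t => by
    apply hbase 1 t
    rw [show p 1 = (γ₁ : Y) from p.target]
    exact γ₁.2
  have P1 : Path γ₀ (⟨H (0, 1), hH1 0⟩ : Yc) := by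
    refine Path.mk ⟨fun t => ⟨H (0, t), hmem0 t⟩, ?_⟩ ?_ ?_
    · exact Continuous.subtype_mk (H.continuous.comp (by fun_prop)) _
    · apply Subtype.ext
      show H (0, 0) = (γ₀ : Y)
      rw [hH0]
      exact p.source
    · rfl
  have P2 : Path (⟨H (0, 1), hH1 0⟩ : Yc) (⟨H (1, 1), hH1 1⟩ : Yc) := by
    refine Path.mk ⟨fun a => ⟨H (a, 1), hH1 a⟩, ?_⟩ rfl rfl
    exact Continuous.subtype_mk (H.continuous.comp (by fun_prop)) _
  have P3 : Path γ₁ (⟨H (1, 1), hH1 1⟩ : Yc) := by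
    refine Path.mk ⟨fun t => ⟨H (1, t), hmem1 t⟩, ?_⟩ ?_ ?_
    · exact Continuous.subtype_mk (H.continuous.comp (by fun_prop)) _
    · apply Subtype.ext
      show H (1, 0) = (γ₁ : Y)
      rw [hH0]
      exact p.target
    · rfl
  exact ⟨(P1.trans P2).trans P3.symm⟩

/-- π_n surjectivity. -/
lemma surj_aux [PathConnectedSpace X] (γ : Yc) (q : Ω^ N Y (γ : Y)) :
    ∃ q' : Ω^ N Yc γ,
      ContinuousMap.HomotopicRel ((freeLoopInclusion X c).comp q'.1) q.1 (Cube.boundary N) := by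
  classical
  set qs : Ω^ N Y (γ : Y) := stretchG q with hqs
  obtain ⟨R, hR0, hR1⟩ := exists_R c qs.1 ctCube (fun _ => 0) ctCube_zero ctCube_one
  obtain ⟨H, hH0, hH1, hHr⟩ := detour_curried c qs.1 R hR0 hR1
  have mem : ∀ s : N → I, c ∈ Set.range (H (ψst s, pr (τ s))) := by
    intro s
    by_cases h : τ s = 1
    · rw [h, pr_one]
      exact hH1 (ψst s)
    · apply hHr (ψst s) (pr (τ s))
      have hb : ψst (ψst s) ∈ Cube.boundary N := ψst_boundary (ψst_boundary_of_τ_ne_one h)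
      show c ∈ Set.range (qs.1 (ψst s))
      rw [show qs.1 (ψst s) = q.1 (ψst (ψst s)) from rfl, q.2 _ hb]
      exact γ.2
  have hcont : Continuous fun s : N → I => (⟨H (ψst s, pr (τ s)), mem s⟩ : Yc) :=
    Continuous.subtype_mk (H.continuous.comp ((ψst_continuous).prodMk
      (continuous_projIcc.comp τ_continuous))) _
  have hbdry : ∀ y ∈ Cube.boundary N,
      (⟨fun s => ⟨H (ψst s, pr (τ s)), mem s⟩, hcont⟩ : C(N → I, Yc)) y = γ := by
    intro y hy
    apply Subtype.ext
    show H (ψst y, pr (τ y)) = (γ : Y)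
    rw [τ_boundary hy, pr_zero, hH0]
    show q.1 (ψst (ψst y)) = (γ : Y)
    exact q.2 _ (ψst_boundary (ψst_boundary hy))
  set q' : Ω^ N Yc γ := ⟨⟨fun s => ⟨H (ψst s, pr (τ s)), mem s⟩, hcont⟩, hbdry⟩ with hq'
  refine ⟨q', ?_⟩
  set mq' : Ω^ N Y (γ : Y) := ⟨(freeLoopInclusion X c).comp q'.1, fun y hy => by
    show ((q'.1 y : Yc) : Y) = (γ : Y)
    rw [hbdry y hy]⟩ with hmq'
  have K : ContinuousMap.HomotopyRel qs.1 mq'.1 (Cube.boundary N) := by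
    refine ⟨⟨⟨fun p => H (ψu p.1 p.2, pr ((p.1:ℝ) * τ p.2)), ?_⟩, ?_, ?_⟩, ?_⟩
    · apply H.continuous.comp
      apply Continuous.prodMk ψu_continuous
      exact continuous_projIcc.comp ((continuous_induced_dom.comp continuous_fst).mul
        (τ_continuous.comp continuous_snd))
    · intro s
      show H (ψu 0 s, pr (((0:I):ℝ) * τ s)) = qs.1 s
      rw [show ((0:I):ℝ) * τ s = 0 by norm_num, pr_zero, hH0, ψu_zero]
    · intro s
      show H (ψu 1 s, pr (((1:I):ℝ) * τ s)) = _
      rw [show ((1:I):ℝ) * τ s = τ s by norm_num]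
      rfl
    · intro t y hy
      show H (ψu t y, pr ((t:ℝ) * τ y)) = qs.1 y
      rw [τ_boundary hy, mul_zero, pr_zero, hH0]
      show q.1 (ψst (ψu t y)) = qs.1 y
      rw [q.2 _ (ψst_boundary (ψu_boundary t hy))]
      show (γ : Y) = q.1 (ψst y)
      rw [q.2 _ (ψst_boundary hy)]
  have hKK : GenLoop.Homotopic qs mq' := ⟨K⟩
  exact ((stretch_homotopic q).trans hKK).symm

/-- π_n injectivity. -/
lemma inj_aux [PathConnectedSpace X] (γ : Yc) (v₀ v₁ : Ω^ N Yc γ)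
    (h : ContinuousMap.HomotopicRel ((freeLoopInclusion X c).comp v₀.1)
      ((freeLoopInclusion X c).comp v₁.1) (Cube.boundary N)) :
    GenLoop.Homotopic v₀ v₁ := by
  classical
  obtain ⟨H0⟩ := h
  set hmap : C((N → I) × I, Y) := H0.toContinuousMap.comp
    ⟨fun p => (p.2, ψst p.1), (continuous_snd.prodMk (ψst_continuous.comp continuous_fst))⟩
    with hhm
  obtain ⟨R, hR0, hR1⟩ := exists_R c hmap ctCube2 ((fun _ => 0), 0) ctCube2_zero ctCube2_one
  obtain ⟨Hd, hH0, hH1, hHr⟩ := detour_curried c hmap R hR0 hR1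
  have hmap01 : ∀ (s : N → I) (t : I), hmap (s, t) = H0 (t, ψst s) := fun s t => rfl
  have mem : ∀ (s : N → I) (t : I), c ∈ Set.range (Hd ((ψst s, ψI t), pr (τ s * wt t))) := by
    intro s t
    by_cases hτ : τ s = 1
    · by_cases hw : wt t = 1
      · rw [hτ, hw, mul_one, pr_one]
        exact hH1 (ψst s, ψI t)
      · apply hHr (ψst s, ψI t)
        show c ∈ Set.range (hmap (ψst s, ψI t))
        rcases wt_cases t with h1 | h1 | h1
        · exact absurd h1 hw
        · rw [hmap01, ψI_lt h1, H0.apply_zero]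
          exact (v₀.1 (ψst (ψst s))).2
        · rw [hmap01, ψI_gt h1, H0.apply_one]
          exact (v₁.1 (ψst (ψst s))).2
    · apply hHr (ψst s, ψI t)
      show c ∈ Set.range (hmap (ψst s, ψI t))
      have hb : ψst (ψst s) ∈ Cube.boundary N := ψst_boundary (ψst_boundary_of_τ_ne_one hτ)
      rw [hmap01, H0.eq_fst (ψI t) hb]
      show c ∈ Set.range ((v₀.1 (ψst (ψst s))) : Y)
      rw [v₀.2 _ hb]
      exact γ.2
  have K : ContinuousMap.HomotopyRel (stretchG (stretchG v₀)).1 (stretchG (stretchG v₁)).1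
      (Cube.boundary N) := by
    refine ⟨⟨⟨fun p => ⟨Hd ((ψst p.2, ψI p.1), pr (τ p.2 * wt p.1)), mem p.2 p.1⟩, ?_⟩, ?_, ?_⟩, ?_⟩
    · apply Continuous.subtype_mk
      apply Hd.continuous.comp
      apply Continuous.prodMk
      · exact ((ψst_continuous.comp continuous_snd).prodMk (ψI_continuous.comp continuous_fst))
      · exact continuous_projIcc.comp ((τ_continuous.comp continuous_snd).mul
          (wt_continuous.comp continuous_fst))
    · intro s
      apply Subtype.ext
      show Hd ((ψst s, ψI 0), pr (τ s * wt 0)) = ((stretchG (stretchG v₀)) s : Y)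
      rw [ψI_zero, wt_zero, mul_zero, pr_zero, hH0, hmap01, H0.apply_zero]
      rfl
    · intro s
      apply Subtype.ext
      show Hd ((ψst s, ψI 1), pr (τ s * wt 1)) = ((stretchG (stretchG v₁)) s : Y)
      rw [ψI_one, wt_one, mul_zero, pr_zero, hH0, hmap01, H0.apply_one]
      rfl
    · intro t y hy
      apply Subtype.ext
      show Hd ((ψst y, ψI t), pr (τ y * wt t)) = ((stretchG (stretchG v₀)) y : Y)
      rw [τ_boundary hy, zero_mul, pr_zero, hH0, hmap01,
        H0.eq_fst (ψI t) (ψst_boundary (ψst_boundary hy))]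
      rfl

  have h1 : GenLoop.Homotopic v₀ (stretchG (stretchG v₀)) :=
    (stretch_homotopic v₀).trans (stretch_homotopic (stretchG v₀))
  have h2 : GenLoop.Homotopic v₁ (stretchG (stretchG v₁)) :=
    (stretch_homotopic v₁).trans (stretch_homotopic (stretchG v₁))
  have hKK : GenLoop.Homotopic (stretchG (stretchG v₀)) (stretchG (stretchG v₁)) := ⟨K⟩
  exact (h1.trans hKK).trans h2.symm

lemma mul_spec' {N Z : Type} [TopologicalSpace Z] {z : Z} [DecidableEq N] [Nonempty N]
    (i : N) (p q : Ω^ N Z z) :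
    @HMul.hMul (HomotopyGroup N Z z) (HomotopyGroup N Z z) (HomotopyGroup N Z z) _
      ⟦p⟧ ⟦q⟧ = ⟦GenLoop.transAt i q p⟧ :=
  HomotopyGroup.mul_spec (i := i)

end Main

end FLW


/-- For a path-connected space `X` and `c ∈ X`, the inclusion `∧ᶜX ↪ ∧X` is a weak
homotopy equivalence: it induces a bijection on path components and, for every
`γ ∈ ∧ᶜX` and every `n ≥ 1` (written `n + 1`), a group isomorphism
`π_n(∧ᶜX, γ) → π_n(∧X, γ)`. -/
theorem freeLoopInclusion_weak_homotopy_equivalence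
    (X : Type) [TopologicalSpace X] [PathConnectedSpace X] (c : X) :
    Function.Bijective (inducedPi0 (freeLoopInclusion X c)) ∧
    ∀ (γ : FreeLoopsThrough X c) (n : ℕ),
      Function.Bijective (inducedPi (Fin (n + 1)) (freeLoopInclusion X c) γ) ∧
      ∀ a b : HomotopyGroup (Fin (n + 1)) (FreeLoopsThrough X c) γ,
        inducedPi (Fin (n + 1)) (freeLoopInclusion X c) γ (a * b) =
          inducedPi (Fin (n + 1)) (freeLoopInclusion X c) γ a *
            inducedPi (Fin (n + 1)) (freeLoopInclusion X c) γ b := by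
  constructor
  · constructor
    · intro a b h
      obtain ⟨γ₀, rfl⟩ := Quotient.exists_rep a
      obtain ⟨γ₁, rfl⟩ := Quotient.exists_rep b
      unfold inducedPi0 at h
      erw [Quotient.map_mk, Quotient.map_mk] at h
      exact Quotient.sound (FLW.inj0 γ₀ γ₁ (Quotient.exact h))
    · intro b
      obtain ⟨f, rfl⟩ := Quotient.exists_rep b
      obtain ⟨γ', hJ⟩ := FLW.surj0 (c := c) f
      refine ⟨Quotient.mk _ γ', ?_⟩
      unfold inducedPi0
      erw [Quotient.map_mk]
      exact Quotient.sound hJ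
  · intro γ n
    refine ⟨⟨?_, ?_⟩, ?_⟩
    · intro a b h
      obtain ⟨p, rfl⟩ := Quotient.exists_rep a
      obtain ⟨q, rfl⟩ := Quotient.exists_rep b
      unfold inducedPi at h
      erw [Quotient.map_mk, Quotient.map_mk] at h
      exact Quotient.sound (FLW.inj_aux γ p q (Quotient.exact h))
    · intro b
      obtain ⟨q, rfl⟩ := Quotient.exists_rep b
      obtain ⟨q', hq⟩ := FLW.surj_aux γ q
      refine ⟨Quotient.mk _ q', ?_⟩
      unfold inducedPi
      erw [Quotient.map_mk]
      exact Quotient.sound hq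
    · intro a b
      obtain ⟨p, rfl⟩ := Quotient.exists_rep a
      obtain ⟨q, rfl⟩ := Quotient.exists_rep b
      rw [FLW.mul_spec' (0 : Fin (n+1)) p q]
      unfold inducedPi
      erw [Quotient.map_mk, Quotient.map_mk, Quotient.map_mk]
      rw [FLW.mul_spec' (0 : Fin (n+1))]
      apply congrArg
      apply GenLoop.ext
      intro y
      show Subtype.val ((GenLoop.transAt 0 q p) y) = _
      unfold GenLoop.transAt
      rw [GenLoop.coe_copy, GenLoop.coe_copy]
      rw [apply_ite Subtype.val]
      split_ifs <;> rfl
end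
end

section
/- Let X be a path-connected topological space and let b, c ∈ X. Then the space Ω_b^c X of loops based at b and passing through the point c is homotopy equivalent to the ordinary based loop space Ω_b X; that is, there exist continuous maps Ω_b^c X → Ω_b X and Ω_b X → Ω_b^c X whose two composites are homotopic to the respective identity maps. -/
open scoped unitInterval

section aux

variable {X : Type} [TopologicalSpace X] {b c : X}

/-- The underlying function of the homotopy: at time `t`, the loop `γ` compressed to
`[0, 1 - t/2]` followed by a tent along `p` up to parameter `t` and back. -/
noncomputable def loopThruF (p : Path b c) (q : I × Path b b) (s : I) : X :=
  if (s : ℝ) ≤ 1 - (q.1 : ℝ) / 2 then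
    q.2.extend ((s : ℝ) / (1 - (q.1 : ℝ) / 2))
  else
    p.extend (min (4 * ((s : ℝ) - 1 + (q.1 : ℝ) / 2)) (4 * (1 - (s : ℝ))))

lemma loopThruF_continuous (p : Path b c) :
    Continuous (fun z : (I × Path b b) × I => loopThruF p z.1 z.2) := by
  unfold loopThruF
  apply Continuous.if_le
  · apply Continuous.pathExtend
    · exact continuous_eval.comp
        (((continuous_snd.comp continuous_fst).comp continuous_fst).prodMk continuous_snd)
    · have h1 : Continuous fun z : (I × Path b b) × I => ((z.2 : ℝ)) :=
        continuous_subtype_val.comp continuous_snd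
      have h2 : Continuous fun z : (I × Path b b) × I => (1 - (z.1.1 : ℝ) / 2) := by
        fun_prop
      exact h1.div h2 (fun z => by
        have := z.1.1.2.2
        nlinarith)
  · exact p.continuous_extend.comp (by fun_prop)
  · fun_prop
  · fun_prop
  · rintro ⟨⟨t, γ⟩, s⟩ h
    dsimp only at h ⊢
    rw [h]
    have ht0 : (0:ℝ) ≤ t := t.2.1
    have hne : (1 - (t:ℝ)/2) ≠ 0 := by nlinarith [t.2.2]
    rw [div_self hne]
    have : min (4 * ((1 - (t:ℝ)/2) - 1 + (t:ℝ)/2)) (4 * (1 - (1 - (t:ℝ)/2))) = 0 := by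
      rw [show (1 - (t:ℝ)/2) - 1 + (t:ℝ)/2 = 0 by ring]
      rw [min_eq_left (by nlinarith)]
      ring
    rw [this]
    simp [Path.extend_extends' , Path.extend_zero, Path.extend_one]

/-- The homotopy as a family of loops. -/
noncomputable def loopThruH (p : Path b c) (q : I × Path b b) : Path b b where
  toFun s := loopThruF p q s
  continuous_toFun := (loopThruF_continuous p).comp
    (Continuous.prodMk continuous_const continuous_id)
  source' := by
    have ht : (0:ℝ) ≤ 1 - (q.1 : ℝ)/2 := by nlinarith [q.1.2.2]
    simp only [loopThruF, Set.Icc.coe_zero, if_pos ht, zero_div, Path.extend_zero]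
  target' := by
    have ht0 : (0:ℝ) ≤ q.1 := q.1.2.1
    by_cases h : (1:ℝ) ≤ 1 - (q.1 : ℝ)/2
    · have hq : (q.1 : ℝ) = 0 := by linarith
      simp only [loopThruF, Set.Icc.coe_one, if_pos h, hq]
      norm_num
    · simp only [loopThruF, Set.Icc.coe_one, if_neg h]
      rw [show (4 : ℝ) * (1 - 1) = 0 by ring,
        min_eq_right (by nlinarith), Path.extend_zero]

lemma loopThruH_zero (p : Path b c) (γ : Path b b) : loopThruH p (0, γ) = γ := by
  ext s
  simp only [loopThruH, loopThruF, Path.coe_mk_mk]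
  have hs : (s : ℝ) ≤ 1 - ((0 : I) : ℝ) / 2 := by
    simpa using s.2.2
  rw [if_pos hs]
  simp [Path.extend_extends' ]

lemma loopThruH_mem (p : Path b c) (γ : Path b b) :
    c ∈ Set.range (loopThruH p (1, γ)) := by
  refine ⟨⟨3/4, by norm_num, by norm_num⟩, ?_⟩
  simp only [loopThruH, loopThruF, Path.coe_mk_mk]
  rw [if_neg (by norm_num)]
  have : min (4 * ((3/4 : ℝ) - 1 + ((1:I):ℝ) / 2)) (4 * (1 - (3/4:ℝ))) = 1 := by
    norm_num
  rw [this]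
  simp

lemma loopThruH_mem_of_mem (p : Path b c) (t : I) (γ : Path b b)
    (h : c ∈ Set.range γ) : c ∈ Set.range (loopThruH p (t, γ)) := by
  obtain ⟨s₀, hs₀⟩ := h
  have hfac : (0:ℝ) ≤ 1 - (t : ℝ)/2 := by nlinarith [t.2.2]
  have hfac' : (1 - (t : ℝ)/2) ≠ 0 := by nlinarith [t.2.2]
  refine ⟨⟨(s₀ : ℝ) * (1 - (t : ℝ)/2), ?_, ?_⟩, ?_⟩
  · exact mul_nonneg s₀.2.1 hfac
  · nlinarith [s₀.2.2, s₀.2.1, t.2.1, hfac]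
  · simp only [loopThruH, loopThruF, Path.coe_mk_mk]
    rw [if_pos (by nlinarith [s₀.2.2])]
    rw [mul_div_assoc, div_self hfac', mul_one]
    rw [Path.extend_apply γ s₀.2]
    simpa using hs₀

end aux

/-- For a path-connected space `X` and points `b c : X`, the space `Ω_b^c X` of
loops based at `b` passing through `c` is homotopy equivalent to the based loop
space `Ω_b X`: there are continuous maps in both directions whose composites are
homotopic to the identities. -/
theorem loopsThrough_homotopyEquiv_loopSpace
    (X : Type) [TopologicalSpace X] [PathConnectedSpace X] (b c : X) :
    ∃ (f : C({γ : Path b b // c ∈ Set.range γ}, Path b b))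
      (g : C(Path b b, {γ : Path b b // c ∈ Set.range γ})),
      (f.comp g).Homotopic (ContinuousMap.id (Path b b)) ∧
      (g.comp f).Homotopic (ContinuousMap.id {γ : Path b b // c ∈ Set.range γ}) := by
  obtain ⟨p⟩ : Nonempty (Path b c) := ⟨(PathConnectedSpace.joined b c).somePath⟩
  have hHcont : Continuous (loopThruH p (b := b) (c := c)) :=
    Path.continuous_uncurry_iff.mp (loopThruF_continuous p)
  refine ⟨⟨Subtype.val, continuous_subtype_val⟩,
    ⟨fun γ => ⟨loopThruH p (1, γ), loopThruH_mem p γ⟩,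
      Continuous.subtype_mk (hHcont.comp (continuous_const.prodMk continuous_id)) _⟩,
    ?_, ?_⟩
  · exact ⟨{ toFun := fun q => loopThruH p (unitInterval.symm q.1, q.2)
             continuous_toFun := hHcont.comp
               ((unitInterval.continuous_symm.comp continuous_fst).prodMk continuous_snd)
             map_zero_left := fun γ => by
               simp [ContinuousMap.comp]
             map_one_left := fun γ => by
               simp [loopThruH_zero] }⟩
  · refine ⟨{ toFun := fun q => ⟨loopThruH p (unitInterval.symm q.1, q.2.1),
                loopThruH_mem_of_mem p (unitInterval.symm q.1) q.2.1 q.2.2⟩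
              continuous_toFun := Continuous.subtype_mk
                (hHcont.comp ((unitInterval.continuous_symm.comp continuous_fst).prodMk
                  (continuous_subtype_val.comp continuous_snd))) _
              map_zero_left := fun γ => by
                simp [ContinuousMap.comp]
              map_one_left := fun γ => by
                exact Subtype.ext (by simp [loopThruH_zero]) }⟩
end

section
/- Let X be a topological space and c ∈ X. The evaluation map ev : ∧^c X → X, ev(f) = f(1) (evaluation at the distinguished point 1 ∈ S¹), is a Hurewicz fibration: for every topological space Y, every continuous map F : Y → ∧^c X, and every continuous homotopy H : Y × [0,1] → X with H(y,0) = ev(F(y)) for all y ∈ Y, there exists a continuous homotopy H̃ : Y × [0,1] → ∧^c X such that H̃(y,0) = F(y) and ev(H̃(y,t)) = H(y,t) for all y ∈ Y and t ∈ [0,1]. -/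
open scoped unitInterval Real
open Complex Topology

namespace FLHF

/-- parameter in `[0,1)` of a circle point -/
noncomputable def sOf (z : Circle) : ℝ :=
  if 0 ≤ arg z then arg z / (2*π) else arg z / (2*π) + 1

/-- `2π·min(s,1-s)` as a continuous function of the point `exp(2πis)` -/
noncomputable def aOf (z : Circle) : ℝ := Real.arccos (z : ℂ).re

/-- the reparametrization function -/
noncomputable def ψ (t s : ℝ) : ℝ := min 1 (max 0 ((3*s - t)/(3 - 2*t)))

/-- the circle self-map collapsing the two spike arcs -/
noncomputable def ρ (t : ℝ) (z : Circle) : Circle := Circle.exp (2*π * ψ t (sOf z))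

lemma continuous_aOf : Continuous aOf :=
  Real.continuous_arccos.comp (Complex.continuous_re.comp continuous_subtype_val)

lemma sOf_mem (z : Circle) : sOf z ∈ Set.Ico (0:ℝ) 1 := by
  have h1 := Complex.neg_pi_lt_arg (z : ℂ)
  have h2 := Complex.arg_le_pi (z : ℂ)
  have hπ := Real.pi_pos
  unfold sOf
  split_ifs with h
  · constructor
    · positivity
    · rw [div_lt_one (by positivity)]; nlinarith
  · constructor
    · have : -(1/2) ≤ arg z / (2*π) := by
        rw [le_div_iff₀ (by positivity : (0:ℝ) < 2*π)]; nlinarith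
      linarith
    · have : arg z / (2*π) < 0 := div_neg_of_neg_of_pos (by linarith) (by positivity)
      linarith

lemma exp_sOf (z : Circle) : Circle.exp (2*π * sOf z) = z := by
  unfold sOf
  split_ifs with h
  · rw [mul_div_cancel₀ _ (by positivity : (2*π:ℝ) ≠ 0)]
    exact Circle.exp_arg z
  · rw [mul_add, mul_one, mul_div_cancel₀ _ (by positivity : (2*π:ℝ) ≠ 0),
      Circle.exp_add_two_pi]
    exact Circle.exp_arg z

lemma sOf_exp {s : ℝ} (hs : s ∈ Set.Ico (0:ℝ) 1) : sOf (Circle.exp (2*π*s)) = s := by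
  have hπ := Real.pi_pos
  rcases le_or_gt s (1/2) with h | h
  · have harg : arg (Circle.exp (2*π*s)) = 2*π*s := by
      apply Circle.arg_exp <;> nlinarith [hs.1]
    unfold sOf
    rw [harg]
    rw [if_pos (by nlinarith [hs.1])]
    field_simp
  · have harg : arg (Circle.exp (2*π*s)) = 2*π*s - 2*π := by
      rw [← Circle.exp_sub_two_pi]
      apply Circle.arg_exp <;> nlinarith [hs.2]
    unfold sOf
    rw [harg, if_neg (by nlinarith [hs.2])]
    field_simp
    ring

lemma aOf_exp {s : ℝ} (hs : s ∈ Set.Icc (0:ℝ) 1) :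
    aOf (Circle.exp (2*π*s)) = 2*π * min s (1-s) := by
  have hπ := Real.pi_pos
  have hre : ((Circle.exp (2*π*s) : Circle) : ℂ).re = Real.cos (2*π*s) := by
    rw [Circle.coe_exp, Complex.exp_ofReal_mul_I_re]
  unfold aOf
  rw [hre]
  rcases le_or_gt s (1/2) with h | h
  · rw [min_eq_left (by linarith)]
    exact Real.arccos_cos (by nlinarith [hs.1]) (by nlinarith)
  · rw [min_eq_right (by linarith)]
    have : Real.cos (2*π*s) = Real.cos (2*π*(1-s)) := by
      rw [← Real.cos_sub_two_pi (2*π*s), ← Real.cos_neg]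
      ring_nf
    rw [this]
    exact Real.arccos_cos (by nlinarith [hs.2]) (by nlinarith)


lemma ψ_zero {t : ℝ} (ht0 : 0 ≤ t) (ht1 : t ≤ 1) : ψ t 0 = 0 := by
  unfold ψ
  rw [max_eq_left, min_eq_right]
  · norm_num
  · apply div_nonpos_of_nonpos_of_nonneg <;> linarith

lemma ψ_one {t : ℝ} (ht0 : 0 ≤ t) (ht1 : t ≤ 1) : ψ t 1 = 1 := by
  unfold ψ
  have hd : (0:ℝ) < 3 - 2*t := by linarith
  rw [max_eq_right, min_eq_left]
  · rw [le_div_iff₀ hd]; linarith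
  · apply div_nonneg <;> linarith

lemma continuous_ψ : Continuous (fun p : I × ℝ => ψ p.1 p.2) := by
  apply Continuous.min continuous_const
  apply Continuous.max continuous_const
  apply Continuous.div
  · fun_prop
  · fun_prop
  · exact fun p => ne_of_gt (by nlinarith [p.1.2.2])

lemma ρ_exp {t s : ℝ} (ht : t ∈ Set.Icc (0:ℝ) 1) (hs : s ∈ Set.Icc (0:ℝ) 1) :
    ρ t (Circle.exp (2*π*s)) = Circle.exp (2*π * ψ t s) := by
  rcases eq_or_lt_of_le hs.2 with h1 | h1
  · subst h1
    have e1 : Circle.exp (2*π*(1:ℝ)) = 1 := by rw [mul_one]; exact Circle.exp_two_pi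
    have e0 : (1:Circle) = Circle.exp (2*π*(0:ℝ)) := by rw [mul_zero, Circle.exp_zero]
    rw [ρ, e1, e0, sOf_exp ⟨le_refl 0, zero_lt_one⟩, ψ_zero ht.1 ht.2, mul_zero,
      Circle.exp_zero, ψ_one ht.1 ht.2, e1]
  · rw [ρ, sOf_exp ⟨hs.1, h1⟩]

lemma continuous_ρ : Continuous (fun p : I × Circle => ρ p.1 p.2) := by
  have hp : Continuous (fun q : I × I => ((q.1, Circle.exp (2*π*(q.2:ℝ))) : I × Circle)) := by
    fun_prop
  have hsurj : Function.Surjective (fun q : I × I => ((q.1, Circle.exp (2*π*(q.2:ℝ))) : I × Circle)) := by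
    rintro ⟨t, z⟩
    refine ⟨(t, ⟨sOf z, (sOf_mem z).1, le_of_lt (sOf_mem z).2⟩), ?_⟩
    simp [exp_sOf z]
  have hq : IsQuotientMap (fun q : I × I => ((q.1, Circle.exp (2*π*(q.2:ℝ))) : I × Circle)) :=
    (hp.isClosedMap).isQuotientMap hp hsurj
  rw [hq.continuous_iff]
  have : (fun p : I × Circle => ρ p.1 p.2) ∘ (fun q : I × I => ((q.1, Circle.exp (2*π*(q.2:ℝ))) : I × Circle))
      = fun q : I × I => Circle.exp (2*π * ψ q.1 q.2) := by
    funext q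
    exact ρ_exp q.1.2 q.2.2
  rw [this]
  exact Circle.exp.continuous.comp (continuous_const.mul
    (continuous_ψ.comp (continuous_fst.prodMk (continuous_subtype_val.comp continuous_snd))))


lemma aOf_eq (z : Circle) : aOf z = 2*π * min (sOf z) (1 - sOf z) := by
  conv_lhs => rw [← exp_sOf z]
  exact aOf_exp ⟨(sOf_mem z).1, le_of_lt (sOf_mem z).2⟩

lemma aOf_one : aOf (1 : Circle) = 0 := by
  unfold aOf
  rw [Circle.coe_one, Complex.one_re, Real.arccos_one]

lemma ρ_boundary {t : ℝ} (ht : t ∈ Set.Icc (0:ℝ) 1) {z : Circle}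
    (h : 3 * aOf z = 2*π*t) : ρ t z = 1 := by
  have hπ := Real.pi_pos
  have hs := sOf_mem z
  rw [aOf_eq z] at h
  have hmin : 3 * min (sOf z) (1 - sOf z) = t := by
    have h2 : 2*π * (3 * min (sOf z) (1 - sOf z)) = 2*π*t := by ring_nf; ring_nf at h; linarith
    exact mul_left_cancel₀ (by positivity) h2
  rcases le_total (sOf z) (1 - sOf z) with hc | hc
  · rw [min_eq_left hc] at hmin
    have hψ : ψ t (sOf z) = 0 := by
      unfold ψ
      rw [show 3 * sOf z - t = 0 by linarith]
      rw [zero_div, max_self, min_eq_right zero_le_one]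
    rw [ρ, hψ, mul_zero, Circle.exp_zero]
  · rw [min_eq_right hc] at hmin
    have hd : (0:ℝ) < 3 - 2*t := by nlinarith [ht.2]
    have hψ : ψ t (sOf z) = 1 := by
      unfold ψ
      rw [show (3 * sOf z - t) = 3 - 2*t by linarith, div_self (ne_of_gt hd)]
      rw [max_eq_right zero_le_one, min_self]
    rw [ρ, hψ, mul_one, Circle.exp_two_pi]

lemma ρ_zero (z : Circle) : ρ 0 z = z := by
  have hs := sOf_mem z
  have hψ : ψ 0 (sOf z) = sOf z := by
    unfold ψ
    rw [mul_zero, sub_zero, sub_zero, show (3 * sOf z)/3 = sOf z by ring,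
      max_eq_right hs.1, min_eq_right (le_of_lt hs.2)]
  rw [ρ, hψ, exp_sOf]

lemma aOf_eq_zero {z : Circle} (h : aOf z ≤ 0) : z = 1 := by
  have hπ := Real.pi_pos
  have hs := sOf_mem z
  rw [aOf_eq z] at h
  have hmin : min (sOf z) (1 - sOf z) ≤ 0 := by nlinarith [h]
  have h0 : sOf z = 0 := by
    rcases le_total (sOf z) (1 - sOf z) with hc | hc
    · rw [min_eq_left hc] at hmin; linarith [hs.1]
    · rw [min_eq_right hc] at hmin; linarith [hs.2]
  rw [← exp_sOf z, h0, mul_zero, Circle.exp_zero]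

lemma reach {t s₀ : ℝ} (ht : t ∈ Set.Icc (0:ℝ) 1) (hs₀ : s₀ ∈ Set.Ico (0:ℝ) 1) :
    ∃ z : Circle, ρ t z = Circle.exp (2*π*s₀) ∧ 2*π*t ≤ 3 * aOf z := by
  have hπ := Real.pi_pos
  obtain ⟨ht0, ht1⟩ := ht
  obtain ⟨hs₀0, hs₀1⟩ := hs₀
  have ht : t ∈ Set.Icc (0:ℝ) 1 := ⟨ht0, ht1⟩
  have hs₀ : s₀ ∈ Set.Ico (0:ℝ) 1 := ⟨hs₀0, hs₀1⟩
  have hsdef : ∃ s : ℝ, s = t/3 + s₀*(1 - 2*t/3) := ⟨_, rfl⟩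
  obtain ⟨s, hsdef⟩ := hsdef
  have hs1 : t/3 ≤ s := by rw [hsdef]; nlinarith
  have hs2 : s ≤ 1 - t/3 := by rw [hsdef]; nlinarith
  have hsIcc : s ∈ Set.Icc (0:ℝ) 1 := ⟨by linarith, by linarith⟩
  refine ⟨Circle.exp (2*π*s), ?_, ?_⟩
  · rw [ρ_exp ht hsIcc]
    congr 1
    have hψ : ψ t s = s₀ := by
      unfold ψ
      have hd : (0:ℝ) < 3 - 2*t := by nlinarith [ht.2]
      rw [show 3*s - t = s₀ * (3 - 2*t) by rw [hsdef]; ring,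
        mul_div_assoc, div_self (ne_of_gt hd), mul_one,
        max_eq_right hs₀.1, min_eq_right (le_of_lt hs₀.2)]
    rw [hψ]
  · rw [aOf_exp hsIcc]
    rcases le_total s (1-s) with hc | hc
    · rw [min_eq_left hc]; nlinarith
    · rw [min_eq_right hc]; nlinarith


section Lift

variable {X : Type} [TopologicalSpace X] {c : X}
variable {Y : Type} [TopologicalSpace Y]
variable (F : C(Y, {f : C(Circle, X) // c ∈ Set.range f})) (H : C(Y × I, X))

/-- the lifted homotopy, as a bare function -/
noncomputable def g : (Y × I) × Circle → X := fun w =>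
  if 3 * aOf w.2 ≤ 2*π*(w.1.2 : ℝ) then
    H (w.1.1, Set.projIcc 0 1 zero_le_one ((w.1.2 : ℝ) - 3 * aOf w.2 / (2*π)))
  else (F w.1.1).1 (ρ (w.1.2 : ℝ) w.2)

variable {F H}

lemma hbd (h0 : ∀ y : Y, H (y, 0) = (F y).1 1) :
    ∀ w : (Y × I) × Circle, 3 * aOf w.2 = 2*π*(w.1.2 : ℝ) →
      H (w.1.1, Set.projIcc 0 1 zero_le_one ((w.1.2 : ℝ) - 3 * aOf w.2 / (2*π)))
        = (F w.1.1).1 (ρ (w.1.2 : ℝ) w.2) := by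
  have hπ := Real.pi_pos
  rintro ⟨⟨y, t⟩, z⟩ h
  simp only at h ⊢
  have h1 : (t : ℝ) - 3 * aOf z / (2*π) = 0 := by
    field_simp
    linarith
  rw [h1, ρ_boundary (Set.mem_Icc.2 ⟨t.2.1, t.2.2⟩) h]
  rw [show Set.projIcc (0:ℝ) 1 zero_le_one 0 = (0 : I) from Set.projIcc_left _]
  exact h0 y

lemma hcont (h0 : ∀ y : Y, H (y, 0) = (F y).1 1) : Continuous (g F H) := by
  unfold g
  apply Continuous.if_le
  · exact H.continuous.comp ((continuous_fst.comp continuous_fst).prodMk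
        (continuous_projIcc.comp ((continuous_subtype_val.comp
          (continuous_snd.comp continuous_fst)).sub ((continuous_const.mul
          (continuous_aOf.comp continuous_snd)).div_const _))))
  · have he : Continuous fun w : (Y × I) × Circle =>
          ((F w.1.1 : C(Circle, X)), ρ (w.1.2 : ℝ) w.2) := by
      apply Continuous.prodMk
      · exact continuous_subtype_val.comp (F.continuous.comp (continuous_fst.comp continuous_fst))
      · show Continuous ((fun p : I × Circle => ρ (p.1 : ℝ) p.2) ∘
          (fun w : (Y × I) × Circle => (w.1.2, w.2)))
        exact continuous_ρ.comp ((continuous_snd.comp continuous_fst).prodMk continuous_snd)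
    show Continuous ((fun p : C(Circle, X) × Circle => p.1 p.2) ∘
      (fun w : (Y × I) × Circle => ((F w.1.1 : C(Circle, X)), ρ (w.1.2 : ℝ) w.2)))
    exact ContinuousEval.continuous_eval.comp he
  · exact continuous_const.mul (continuous_aOf.comp continuous_snd)
  · exact continuous_const.mul (continuous_subtype_val.comp (continuous_snd.comp continuous_fst))
  · exact hbd h0

/-- the lifted homotopy as a continuous map -/
noncomputable def K (h0 : ∀ y : Y, H (y, 0) = (F y).1 1) : C((Y × I) × Circle, X) :=
  ⟨g F H, hcont h0⟩

lemma hmem (h0 : ∀ y : Y, H (y, 0) = (F y).1 1) (w : Y × I) :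
    c ∈ Set.range ((K h0).curry w) := by
  obtain ⟨y, t⟩ := w
  obtain ⟨z₀, hz₀⟩ := (F y).2
  obtain ⟨z, hρz, hge⟩ := reach (Set.mem_Icc.2 ⟨t.2.1, t.2.2⟩) (sOf_mem z₀)
  rw [exp_sOf z₀] at hρz
  refine ⟨z, ?_⟩
  show g F H ((y, t), z) = c
  unfold g
  split_ifs with h
  · have heq : 3 * aOf z = 2*π*(t:ℝ) := le_antisymm h hge
    rw [hbd h0 ((y,t),z) heq]
    simp only
    rw [hρz]
    exact hz₀
  · simp only
    rw [hρz]
    exact hz₀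

end Lift

end FLHF

/-- The evaluation map `ev : ∧ᶜX → X`, `ev(f) = f(1)`, from the space of free loops
passing through `c` (a subspace of `C(S¹, X)` with the compact-open topology) is a
Hurewicz fibration: every homotopy into `X` whose initial stage lifts along `ev`
lifts to a homotopy into `∧ᶜX`. -/
theorem freeLoopsThrough_eval_hurewicz_fibration
    (X : Type) [TopologicalSpace X] (c : X)
    (Y : Type) [TopologicalSpace Y]
    (F : C(Y, {f : C(Circle, X) // c ∈ Set.range f}))
    (H : C(Y × I, X))
    (h0 : ∀ y : Y, H (y, 0) = (F y).1 1) :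
    ∃ Htilde : C(Y × I, {f : C(Circle, X) // c ∈ Set.range f}),
      (∀ y : Y, Htilde (y, 0) = F y) ∧
      ∀ (y : Y) (t : I), (Htilde (y, t)).1 1 = H (y, t) := by
  have hπ := Real.pi_pos
  refine ⟨⟨fun w => ⟨(FLHF.K h0).curry w, FLHF.hmem h0 w⟩,
      ((FLHF.K h0).curry.continuous).subtype_mk _⟩, ?_, ?_⟩
  · intro y
    apply Subtype.ext
    apply ContinuousMap.ext
    intro z
    show FLHF.g F H ((y, 0), z) = (F y).1 z
    unfold FLHF.g
    split_ifs with h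
    · have hz : z = 1 := by
        apply FLHF.aOf_eq_zero
        have h' : ((0:I) : ℝ) = 0 := rfl
        rw [h', mul_zero] at h
        nlinarith [h]
      subst hz
      simp only
      rw [FLHF.aOf_one]
      norm_num
      exact h0 y
    · simp only
      rw [show ((0:I):ℝ) = 0 from rfl, FLHF.ρ_zero]
  · intro y t
    show FLHF.g F H ((y, t), 1) = H (y, t)
    unfold FLHF.g
    simp only
    rw [FLHF.aOf_one]
    rw [if_pos (by nlinarith [t.2.1] : 3 * (0:ℝ) ≤ 2*π*(t:ℝ))]
    congr 1
    refine Prod.ext rfl ?_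
    show Set.projIcc (0:ℝ) 1 zero_le_one ((t:ℝ) - 3 * 0 / (2*π)) = t
    rw [mul_zero, zero_div, sub_zero, Set.projIcc_of_mem zero_le_one t.2]
end

section
/- Let X be a topological space and b ∈ X. For α ∈ ℝ/ℤ and a loop φ based at b, define T₁(α, φ) : S¹ → X by T₁(α, φ)(exp(2πiu)) = φ(u + α mod 1) for u ∈ [0,1]. Then T₁(α, φ) is a well-defined continuous free loop, and the resulting map T₁ : (ℝ/ℤ) × Ω_b X → ∧X is continuous (where ∧X carries the compact-open topology and (ℝ/ℤ) × Ω_b X the product topology). -/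
open scoped unitInterval
open Topology

open AddCircle in
/-- The reparametrization action `T₁ : (ℝ/ℤ) × Ω_b X → ∧X`:
`T₁(α, φ)(exp(2πiu)) = φ((u + α) mod 1)` is a well-defined continuous free loop,
and `T₁` is continuous for the compact-open topology on `∧X = C(S¹, X)` and the
product topology on `(ℝ/ℤ) × Ω_b X`. -/
theorem reparametrization_trace_continuous
    (X : Type) [TopologicalSpace X] (b : X) :
    ∃ T : C(AddCircle (1 : ℝ) × Path b b, C(Circle, X)),
      ∀ (α : AddCircle (1 : ℝ)) (φ : Path b b),
        ∀ u ∈ Set.Icc (0 : ℝ) 1,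
          T (α, φ) (Circle.exp (2 * Real.pi * u)) =
            AddCircle.liftIco 1 0 φ.extend ((u : AddCircle (1 : ℝ)) + α) := by
  -- joint continuity of the evaluation of `extend`
  have hE : Continuous fun p : Path b b × ℝ => p.1.extend p.2 :=
    Continuous.pathExtend (Path.continuous_uncurry_iff.mpr continuous_fst) continuous_snd
  -- joint continuity of `(φ, t) ↦ φ.extend (Int.fract t)`
  have hH : Continuous fun p : Path b b × ℝ => p.1.extend (Int.fract p.2) := by
    refine ContinuousOn.comp_fract' (f := fun (φ : Path b b) (t : ℝ) => φ.extend t)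
      (hE.continuousOn) ?_
    intro φ
    simp
  -- the quotient map `id × mk : Path b b × ℝ → Path b b × AddCircle 1`
  have hq : IsQuotientMap (Prod.map (id : Path b b → Path b b)
      ((↑) : ℝ → AddCircle (1 : ℝ))) := by
    refine (IsOpenMap.id.prodMap (QuotientAddGroup.isOpenMap_coe)).isQuotientMap ?_ ?_
    · exact continuous_id.prodMap (continuous_quotient_mk')
    · exact Function.Surjective.prodMap Function.surjective_id
        (fun x => QuotientAddGroup.mk_surjective x)
  -- joint continuity of `(φ, β) ↦ liftIco 1 0 φ.extend β`
  have hM : Continuous fun p : Path b b × AddCircle (1 : ℝ) =>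
      AddCircle.liftIco 1 0 p.1.extend p.2 := by
    rw [hq.continuous_iff]
    have : ∀ p : Path b b × ℝ,
        AddCircle.liftIco 1 0 p.1.extend ((p.2 : AddCircle (1 : ℝ))) =
          p.1.extend (Int.fract p.2) := by
      intro p
      have h1 : ((p.2 : AddCircle (1 : ℝ))) = ((Int.fract p.2 : ℝ) : AddCircle (1 : ℝ)) := by
        rw [Int.fract]
        rw [sub_eq_add_neg, AddCircle.coe_add]
        simp [AddCircle.coe_eq_zero_iff]
      rw [h1, AddCircle.liftIco_zero_coe_apply ⟨Int.fract_nonneg _, Int.fract_lt_one _⟩]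
    simpa only [Prod.map, Function.comp_def, id] using
      (continuous_congr fun p => (this p).symm).mp hH
  -- assemble the map
  have one_ne : (1 : ℝ) ≠ 0 := one_ne_zero
  set e := AddCircle.homeomorphCircle one_ne with he
  refine ⟨ContinuousMap.curry ⟨fun q =>
    AddCircle.liftIco 1 0 q.1.2.extend (e.symm q.2 + q.1.1), ?_⟩, ?_⟩
  · exact hM.comp ((continuous_snd.comp continuous_fst).prodMk
      (((e.symm.continuous.comp continuous_snd)).add
        (continuous_fst.comp continuous_fst)))
  · intro α φ u hu
    have key : e ((u : AddCircle (1 : ℝ))) = Circle.exp (2 * Real.pi * u) := by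
      rw [he, AddCircle.homeomorphCircle_apply, AddCircle.toCircle_apply_mk]
      norm_num
    have : e.symm (Circle.exp (2 * Real.pi * u)) = (u : AddCircle (1 : ℝ)) := by
      rw [← key, Homeomorph.symm_apply_apply]
    simp [ContinuousMap.curry, this]
end
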